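/- Infinite-horizon Lyapunov decrease identity: if P solves the ARE P = Q + A'PA − A'PB(R+B'PB)^{-1}B'PA and P̄ solves the coupled ARE P̄ = (A+BF̄)'P̄(A+BF̄) + F̄'(R+B'PB)F̄ + A'PB(R+B'PB)^{-1}B'PA + A'PBF̄ + F̄'B'PA, and V(x_k, x̄_k) = Σ_i (x_k^i)'P x_k^i + (1/Σ_i μ_i²) x̄_k'P̄x̄_k, then along trajectories x_{k+1}^i = Ax_k^i + Bu_k^i with ū_k = F̄x̄_k and u_k^i = Kx_k^i + (μ_i/Σ_j μ_j²)K̄x̄_k (K = −(R+B'PB)^{-1}B'PA, K̄ = F̄ − K), one has V(x_k,x̄_k) − V(x_{k+1},x̄_{k+1}) = Σ_i [(x_k^i)'Qx_k^i + (u_k^i)'Ru_k^i] ≥ 0. -/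

import Mathlib

open Matrix BigOperators

private lemma dotmv' {n p : ℕ} (M : Matrix (Fin p) (Fin p) ℝ)
    (E G : Matrix (Fin p) (Fin n) ℝ) (w z : Fin n → ℝ) :
      (E *ᵥ w) ⬝ᵥ M *ᵥ (G *ᵥ z) = w ⬝ᵥ (Eᵀ * M * G) *ᵥ z := by
  rw [Matrix.dotProduct_mulVec, Matrix.dotProduct_mulVec, ← Matrix.vecMul_transpose]
  simp [Matrix.vecMul_vecMul, Matrix.mul_assoc, Matrix.dotProduct_mulVec]

private lemma expandQF' {n p : ℕ} (M : Matrix (Fin p) (Fin p) ℝ)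
    (C D : Matrix (Fin p) (Fin n) ℝ) (y b : Fin n → ℝ) (c : ℝ) :
    (C *ᵥ y + c • (D *ᵥ b)) ⬝ᵥ M *ᵥ (C *ᵥ y + c • (D *ᵥ b)) =
      y ⬝ᵥ (Cᵀ * M * C) *ᵥ y + c * (y ⬝ᵥ (Cᵀ * M * D) *ᵥ b)
        + c * (b ⬝ᵥ (Dᵀ * M * C) *ᵥ y) + c ^ 2 * (b ⬝ᵥ (Dᵀ * M * D) *ᵥ b) := by
  simp only [add_dotProduct, dotProduct_add, Matrix.mulVec_add, Matrix.mulVec_smul,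
    smul_dotProduct, dotProduct_smul, smul_eq_mul, dotmv']
  ring

/-- Infinite-horizon Lyapunov decrease identity along trajectories of the
optimal distributed controller. -/
theorem lyapunov_decrease_identity {n m v : ℕ}
    (A : Matrix (Fin n) (Fin n) ℝ) (B : Matrix (Fin n) (Fin m) ℝ)
    (Q : Matrix (Fin n) (Fin n) ℝ) (R : Matrix (Fin m) (Fin m) ℝ)
    (F : Matrix (Fin m) (Fin n) ℝ)
    (hQ : Q.PosSemidef) (hR : R.PosDef)
    (μ : Fin v → ℝ) (hμ : ∑ i, (μ i) ^ 2 ≠ 0)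
    (P Pbar : Matrix (Fin n) (Fin n) ℝ)
    (hPsymm : P.IsSymm) (hPbarsymm : Pbar.IsSymm)
    (hinv : IsUnit (R + Bᵀ * P * B))
    (hP : P = Q + Aᵀ * P * A -
      Aᵀ * P * B * (R + Bᵀ * P * B)⁻¹ * Bᵀ * P * A)
    (hPbar : Pbar = (A + B * F)ᵀ * Pbar * (A + B * F)
      + Fᵀ * (R + Bᵀ * P * B) * F
      + Aᵀ * P * B * (R + Bᵀ * P * B)⁻¹ * Bᵀ * P * A
      + Aᵀ * P * B * F + Fᵀ * Bᵀ * P * A)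
    (K Kbar : Matrix (Fin m) (Fin n) ℝ)
    (hK : K = -((R + Bᵀ * P * B)⁻¹ * Bᵀ * P * A)) (hKbar : Kbar = F - K)
    (x : Fin v → ℕ → Fin n → ℝ) (u : Fin v → ℕ → Fin m → ℝ)
    (xbar : ℕ → Fin n → ℝ) (ubar : ℕ → Fin m → ℝ)
    (hx : ∀ k, xbar k = ∑ i, μ i • x i k)
    (hu : ∀ k, ubar k = ∑ i, μ i • u i k)
    (hdyn : ∀ i k, x i (k + 1) = A *ᵥ x i k + B *ᵥ u i k)
    (hcons : ∀ k, ubar k = F *ᵥ xbar k)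
    (hctrl : ∀ i k,
      u i k = K *ᵥ x i k + (μ i / ∑ j, (μ j) ^ 2) • (Kbar *ᵥ xbar k))
    (V : ℕ → ℝ)
    (hV : ∀ k, V k = (∑ i, x i k ⬝ᵥ P *ᵥ x i k)
      + (1 / ∑ i, (μ i) ^ 2) * (xbar k ⬝ᵥ Pbar *ᵥ xbar k)) :
    ∀ k, V k - V (k + 1)
        = ∑ i, (x i k ⬝ᵥ Q *ᵥ x i k + u i k ⬝ᵥ R *ᵥ u i k) ∧
      0 ≤ ∑ i, (x i k ⬝ᵥ Q *ᵥ x i k + u i k ⬝ᵥ R *ᵥ u i k) := by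
  set s : ℝ := ∑ i, (μ i) ^ 2 with hs
  set S : Matrix (Fin m) (Fin m) ℝ := R + Bᵀ * P * B with hSdef
  have hdet : IsUnit S.det := (Matrix.isUnit_iff_isUnit_det S).mp hinv
  have hSS : S * S⁻¹ = 1 := Matrix.mul_nonsing_inv S hdet
  have hS'S : S⁻¹ * S = 1 := Matrix.nonsing_inv_mul S hdet
  have hRsymm : Rᵀ = R := by
    have := hR.1
    simpa [Matrix.conjTranspose_eq_transpose_of_trivial] using this.eq
  have hSsymm : Sᵀ = S := by
    rw [hSdef]
    simp [Matrix.transpose_add, Matrix.transpose_mul, Matrix.mul_assoc, hPsymm.eq, hRsymm]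
  -- basic identities
  have hSK : S * K = -(Bᵀ * P * A) := by
    rw [hK, Matrix.mul_neg]
    rw [show S * (S⁻¹ * Bᵀ * P * A) = S * S⁻¹ * Bᵀ * P * A by
      simp only [Matrix.mul_assoc], hSS]
    rw [Matrix.one_mul]
  have hBPA : Bᵀ * P * A = -(S * K) := by rw [hSK, neg_neg]
  have hBPA' : Bᵀ * (P * A) = -(S * K) := by rw [← Matrix.mul_assoc, hBPA]
  have hAPB : Aᵀ * P * B = -(Kᵀ * S) := by
    have h := congrArg Matrix.transpose hSK
    simp only [Matrix.transpose_mul, Matrix.transpose_neg, Matrix.transpose_transpose,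
      hSsymm, hPsymm.eq] at h
    rw [Matrix.mul_assoc, h, neg_neg]
  have hAPBS : Aᵀ * P * B * S⁻¹ = -Kᵀ := by
    rw [hAPB, Matrix.neg_mul, Matrix.mul_assoc, hSS, Matrix.mul_one]
  have hq : Aᵀ * P * B * S⁻¹ * Bᵀ * P * A = Kᵀ * S * K := by
    rw [hAPBS]
    simp only [Matrix.neg_mul, Matrix.mul_assoc, hBPA', Matrix.mul_neg, neg_neg]
  have hP' : P = Q + Aᵀ * P * A - Kᵀ * S * K := by rw [← hq]; exact hP
  have hPbar' : Pbar = (A + B * F)ᵀ * Pbar * (A + B * F) + Fᵀ * S * F + Kᵀ * S * K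
      + Aᵀ * P * B * F + Fᵀ * Bᵀ * P * A := by rw [← hq]; exact hPbar
  have hBPB : Bᵀ * P * B = S - R := by rw [hSdef]; noncomm_ring
  -- closed-loop Riccati identity
  have e1 : (A + B * K)ᵀ * P * (A + B * K)
      = Aᵀ * P * A + Aᵀ * P * (B * K) + Kᵀ * (Bᵀ * (P * A)) + Kᵀ * ((Bᵀ * P * B) * K) := by
    simp only [Matrix.transpose_add, Matrix.transpose_mul, Matrix.add_mul, Matrix.mul_add,
      Matrix.mul_assoc]
    abel
  have e2 : Aᵀ * P * (B * K) = -(Kᵀ * S * K) := by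
    rw [← Matrix.mul_assoc, hAPB]
    simp only [Matrix.neg_mul, Matrix.mul_assoc]
  have I1 : (A + B * K)ᵀ * P * (A + B * K) = P - (Q + Kᵀ * R * K) := by
    rw [e1, e2, hBPA', hBPB]
    conv_rhs => rw [hP']
    simp only [Matrix.mul_neg, Matrix.sub_mul, Matrix.mul_sub, Matrix.mul_assoc]
    abel
  -- cross identities
  have hAclPB : (A + B * K)ᵀ * P * B = -(Kᵀ * R) := by
    rw [show (A + B * K)ᵀ * P * B = Aᵀ * P * B + Kᵀ * (Bᵀ * P * B) by
      simp only [Matrix.transpose_add, Matrix.transpose_mul, Matrix.add_mul, Matrix.mul_assoc]]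
    rw [hAPB, hBPB]
    simp only [Matrix.mul_sub]
    abel
  have M2 : (A + B * K)ᵀ * P * (B * Kbar) = -(Kᵀ * R * Kbar) := by
    rw [← Matrix.mul_assoc, hAclPB]
    simp only [Matrix.neg_mul, Matrix.mul_assoc]
  have M3 : (B * Kbar)ᵀ * P * (A + B * K) = -(Kbarᵀ * R * K) := by
    have h := congrArg Matrix.transpose M2
    simp only [Matrix.transpose_mul, Matrix.transpose_neg, Matrix.transpose_transpose,
      hPsymm.eq, hRsymm] at h
    simp only [Matrix.transpose_mul, Matrix.mul_assoc] at h ⊢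
    exact h
  have M4 : (B * Kbar)ᵀ * P * (B * Kbar) = Kbarᵀ * S * Kbar - Kbarᵀ * R * Kbar := by
    rw [show (B * Kbar)ᵀ * P * (B * Kbar) = Kbarᵀ * ((Bᵀ * P * B) * Kbar) by
      simp only [Matrix.transpose_mul, Matrix.mul_assoc]]
    rw [hBPB]
    simp only [Matrix.sub_mul, Matrix.mul_sub, Matrix.mul_assoc]
  -- averaged Riccati identity
  have I2 : Pbar - (A + B * F)ᵀ * Pbar * (A + B * F) = Kbarᵀ * S * Kbar := by
    have h0 : Pbar - (A + B * F)ᵀ * Pbar * (A + B * F)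
        = Fᵀ * S * F + Kᵀ * S * K + Aᵀ * P * B * F + Fᵀ * Bᵀ * P * A := by
      nth_rewrite 1 [hPbar']
      abel
    rw [h0, hKbar, hAPB,
      show Fᵀ * Bᵀ * P * A = Fᵀ * (Bᵀ * (P * A)) by simp only [Matrix.mul_assoc], hBPA']
    simp only [Matrix.transpose_sub, Matrix.sub_mul, Matrix.mul_sub, Matrix.neg_mul,
      Matrix.mul_neg, Matrix.mul_assoc]
    abel
  intro k
  -- dynamics in closed-loop form
  have hz : ∀ i, x i (k + 1) = (A + B * K) *ᵥ x i k + (μ i / s) • ((B * Kbar) *ᵥ xbar k) := by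
    intro i
    rw [hdyn, hctrl]
    simp only [Matrix.mulVec_add, Matrix.mulVec_smul, Matrix.add_mulVec, Matrix.mulVec_mulVec]
    abel
  have hzb : xbar (k + 1) = (A + B * F) *ᵥ xbar k := by
    rw [hx (k + 1)]
    have : ∀ i, x i (k+1) = A *ᵥ x i k + B *ᵥ u i k := fun i => hdyn i k
    calc (∑ i, μ i • x i (k+1)) = ∑ i, (μ i • (A *ᵥ x i k) + μ i • (B *ᵥ u i k)) := by
          simp [this, smul_add]
      _ = A *ᵥ (∑ i, μ i • x i k) + B *ᵥ (∑ i, μ i • u i k) := by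
          rw [Finset.sum_add_distrib]
          congr 1 <;>
          · simp only [← Matrix.mulVecLin_apply]
            rw [map_sum]
            simp only [_root_.map_smul]
      _ = (A + B * F) *ᵥ xbar k := by
          rw [← hx, ← hu, hcons, Matrix.add_mulVec, Matrix.mulVec_mulVec]
  -- per-agent decrease identity
  have key : ∀ i, x i k ⬝ᵥ P *ᵥ x i k - x i (k+1) ⬝ᵥ P *ᵥ x i (k+1)
      = (x i k ⬝ᵥ Q *ᵥ x i k + u i k ⬝ᵥ R *ᵥ u i k)
        - (μ i / s) ^ 2 * (xbar k ⬝ᵥ (Kbarᵀ * S * Kbar) *ᵥ xbar k) := by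
    intro i
    rw [hz i, hctrl i k, expandQF' P (A + B * K) (B * Kbar) (x i k) (xbar k) (μ i / s),
      expandQF' R K Kbar (x i k) (xbar k) (μ i / s)]
    rw [I1, M2, M3, M4]
    simp only [Matrix.sub_mulVec, Matrix.add_mulVec, Matrix.neg_mulVec,
      dotProduct_sub, dotProduct_add, dotProduct_neg]
    ring
  have hT : xbar k ⬝ᵥ Pbar *ᵥ xbar k - xbar (k+1) ⬝ᵥ Pbar *ᵥ xbar (k+1)
      = xbar k ⬝ᵥ (Kbarᵀ * S * Kbar) *ᵥ xbar k := by
    rw [hzb, dotmv']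
    rw [← I2]
    simp only [Matrix.sub_mulVec, dotProduct_sub]
  have hsum : (∑ i, (μ i / s) ^ 2) = 1 / s := by
    simp only [div_pow]
    rw [← Finset.sum_div, ← hs, sq, div_mul_eq_div_div, div_self hμ]
  constructor
  · have hA : (∑ i, x i k ⬝ᵥ P *ᵥ x i k) - (∑ i, x i (k+1) ⬝ᵥ P *ᵥ x i (k+1))
        = (∑ i, (x i k ⬝ᵥ Q *ᵥ x i k + u i k ⬝ᵥ R *ᵥ u i k))
          - (1/s) * (xbar k ⬝ᵥ (Kbarᵀ * S * Kbar) *ᵥ xbar k) := by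
      rw [← Finset.sum_sub_distrib, ← hsum, Finset.sum_mul, ← Finset.sum_sub_distrib]
      exact Finset.sum_congr rfl fun i _ => key i
    calc V k - V (k + 1)
        = ((∑ i, x i k ⬝ᵥ P *ᵥ x i k) - (∑ i, x i (k+1) ⬝ᵥ P *ᵥ x i (k+1)))
          + (1/s) * (xbar k ⬝ᵥ Pbar *ᵥ xbar k - xbar (k+1) ⬝ᵥ Pbar *ᵥ xbar (k+1)) := by
          rw [hV k, hV (k+1)]; ring
      _ = ((∑ i, (x i k ⬝ᵥ Q *ᵥ x i k + u i k ⬝ᵥ R *ᵥ u i k))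
            - (1/s) * (xbar k ⬝ᵥ (Kbarᵀ * S * Kbar) *ᵥ xbar k))
          + (1/s) * (xbar k ⬝ᵥ (Kbarᵀ * S * Kbar) *ᵥ xbar k) := by rw [hA, hT]
      _ = ∑ i, (x i k ⬝ᵥ Q *ᵥ x i k + u i k ⬝ᵥ R *ᵥ u i k) := by ring
  · apply Finset.sum_nonneg
    intro i _
    have h1 := hQ.dotProduct_mulVec_nonneg (x i k)
    have h2 := hR.posSemidef.dotProduct_mulVec_nonneg (u i k)
    simp only [star_trivial] at h1 h2
    positivity
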